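/- Define h_j recursively by h_1(φ) = φ and h_{j+1}(φ) = h_j'(φ)·sin(φ) − (2j−1)·h_j(φ)·cos(φ) for j ≥ 1, and set w_j(φ) := h_j(φ)·(π−φ)^{j−1}/(j!·φ^j·(sin φ)^{j−1}) for φ ∈ (0,π). Then for every j ≥ 1 and every φ ∈ (0, π/2], w_j(φ) ≤ π^{j−1}. -/

import Mathlib

open Real

/-- The sequence of functions `h_j` defined by `h_1(φ) = φ` and
`h_{j+1}(φ) = h_j'(φ)·sin φ − (2j−1)·h_j(φ)·cos φ` for `j ≥ 1` (with `h_0 := 0` as a dummy). -/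
noncomputable def hseq : ℕ → ℝ → ℝ
  | 0 => fun _ => 0
  | 1 => fun φ => φ
  | (j + 2) => fun φ =>
      deriv (hseq (j + 1)) φ * Real.sin φ - (2 * (j : ℝ) + 1) * hseq (j + 1) φ * Real.cos φ

/-- The functions `w_j(φ) = h_j(φ)·(π−φ)^{j−1}/(j!·φ^j·(sin φ)^{j−1})`. -/
noncomputable def wseq (j : ℕ) (φ : ℝ) : ℝ :=
  hseq j φ * (π - φ) ^ (j - 1) / ((Nat.factorial j : ℝ) * φ ^ j * Real.sin φ ^ (j - 1))

noncomputable def qf (φ s : ℝ) : ℝ := 1 + 2*s*Real.cos φ + s^2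

lemma qf_eq (φ s : ℝ) : qf φ s = (s + Real.cos φ)^2 + Real.sin φ^2 := by
  simp only [qf]; have := Real.sin_sq_add_cos_sq φ; nlinarith [this]

lemma qf_pos {φ : ℝ} (h : Real.sin φ ≠ 0) (s : ℝ) : 0 < qf φ s := by
  rw [qf_eq]; positivity

noncomputable def Ik (k : ℕ) (φ : ℝ) : ℝ := ∫ s in (0:ℝ)..1, (2*s)^k / (qf φ s)^(k+1)

lemma sin_lb {x : ℝ} (h1 : 0 < x) (h2 : x < π) : 2 / π * min x (π - x) ≤ Real.sin x := by
  rcases le_total x (π/2) with h | h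
  · have : min x (π - x) = x := min_eq_left (by linarith)
    rw [this]; exact Real.mul_le_sin (le_of_lt h1) h
  · have : min x (π - x) = π - x := min_eq_right (by linarith)
    rw [this, ← Real.sin_pi_sub]
    exact Real.mul_le_sin (by linarith) (by linarith)

lemma arctan_aux1 {φ : ℝ} (h1 : 0 < φ) (h2 : φ < π) :
    Real.arctan ((1 + Real.cos φ) / Real.sin φ) = π/2 - φ/2 := by
  have hs2 : 0 < Real.sin (φ/2) := Real.sin_pos_of_pos_of_lt_pi (by linarith) (by linarith [Real.pi_pos])
  have hc2 : 0 < Real.cos (φ/2) := Real.cos_pos_of_mem_Ioo ⟨by linarith [Real.pi_pos], by linarith⟩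
  have hcos : Real.cos φ = 2 * Real.cos (φ/2)^2 - 1 := by
    have := Real.cos_two_mul (φ/2); rw [show 2*(φ/2) = φ by ring] at this; linarith
  have hsin : Real.sin φ = 2 * Real.sin (φ/2) * Real.cos (φ/2) := by
    have := Real.sin_two_mul (φ/2); rw [show 2*(φ/2) = φ by ring] at this; linarith
  have key : (1 + Real.cos φ) / Real.sin φ = Real.tan (π/2 - φ/2) := by
    rw [Real.tan_eq_sin_div_cos, Real.sin_pi_div_two_sub, Real.cos_pi_div_two_sub, hcos, hsin]
    field_simp; ring
  rw [key, Real.arctan_tan (by linarith) (by linarith)]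

lemma arctan_aux2 {φ : ℝ} (h1 : 0 < φ) (h2 : φ < π) :
    Real.arctan (Real.cos φ / Real.sin φ) = π/2 - φ := by
  have key : Real.cos φ / Real.sin φ = Real.tan (π/2 - φ) := by
    rw [Real.tan_eq_sin_div_cos, Real.sin_pi_div_two_sub, Real.cos_pi_div_two_sub]
  rw [key, Real.arctan_tan (by linarith) (by linarith)]

lemma Ik_zero {φ : ℝ} (h1 : 0 < φ) (h2 : φ < π) : Ik 0 φ = φ / (2 * Real.sin φ) := by
  have hs : 0 < Real.sin φ := Real.sin_pos_of_pos_of_lt_pi h1 h2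
  have hFTC : ∀ s ∈ Set.uIcc (0:ℝ) 1, HasDerivAt
      (fun s => (1/Real.sin φ) * Real.arctan ((s + Real.cos φ)/Real.sin φ))
      ((2*s)^0 / (qf φ s)^(0+1)) s := by
    intro s _
    have h1' : HasDerivAt (fun s : ℝ => (s + Real.cos φ)/Real.sin φ) (1/Real.sin φ) s := by
      simpa using ((hasDerivAt_id s).add_const (Real.cos φ)).div_const (Real.sin φ)
    have h2' := (Real.hasDerivAt_arctan ((s + Real.cos φ)/Real.sin φ)).comp s h1'
    have h3' := h2'.const_mul (1/Real.sin φ)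
    refine h3'.congr_deriv ?_
    rw [qf_eq]
    field_simp
    ring
  have := intervalIntegral.integral_eq_sub_of_hasDerivAt hFTC (by
    apply ContinuousOn.intervalIntegrable
    apply ContinuousOn.div continuousOn_const (by unfold qf; fun_prop)
    intro s _
    exact (pow_pos (qf_pos hs.ne' s) 1).ne')
  rw [Ik, this]
  simp only [zero_add, one_mul]
  rw [arctan_aux1 h1 h2, arctan_aux2 h1 h2]
  field_simp
  ring

lemma cont_integrand (k : ℕ) {φ : ℝ} (h : Real.sin φ ≠ 0) :
    Continuous (fun s => (2*s)^k / qf φ s^(k+1)) := by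
  apply Continuous.div (by fun_prop) (by unfold qf; fun_prop)
  intro s; exact (pow_pos (qf_pos h s) (k+1)).ne'

lemma Ik_hasDeriv (k : ℕ) {φ : ℝ} (h1 : 0 < φ) (h2 : φ < π) :
    HasDerivAt (Ik k) (((k:ℝ)+1) * Real.sin φ * Ik (k+1) φ) φ := by
  have hπ := Real.pi_pos
  set ε := min φ (π - φ) / 2 with hε
  have hε_pos : 0 < ε := by
    have : 0 < min φ (π - φ) := lt_min h1 (by linarith)
    positivity
  have hball : ∀ x ∈ Metric.ball φ ε, 0 < x ∧ x < π ∧ ε ≤ min x (π - x) := by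
    intro x hx
    rw [Metric.mem_ball, Real.dist_eq, abs_lt] at hx
    have hεφ : ε ≤ φ/2 := by rw [hε]; have := min_le_left φ (π - φ); linarith
    have hεπ : ε ≤ (π - φ)/2 := by rw [hε]; have := min_le_right φ (π - φ); linarith
    constructor; · linarith
    constructor; · linarith
    apply le_min <;> linarith
  set δ := 2/π * ε with hδ
  have hδ_pos : 0 < δ := by positivity
  have hsin_lb : ∀ x ∈ Metric.ball φ ε, δ ≤ Real.sin x := by
    intro x hx
    obtain ⟨hx1, hx2, hx3⟩ := hball x hx
    calc δ ≤ 2/π * min x (π - x) := by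
              apply mul_le_mul_of_nonneg_left hx3 (by positivity)
      _ ≤ Real.sin x := sin_lb hx1 hx2
  have hq_lb : ∀ x ∈ Metric.ball φ ε, ∀ s : ℝ, δ^2 ≤ qf x s := by
    intro x hx s
    rw [qf_eq]
    have := hsin_lb x hx
    nlinarith [sq_nonneg (s + Real.cos x)]
  set F' : ℝ → ℝ → ℝ := fun x s => (((k:ℝ)+1) * Real.sin x * (2*s)^(k+1)) / qf x s^(k+2)
    with hF'
  have hφs : (0:ℝ) < Real.sin φ := Real.sin_pos_of_pos_of_lt_pi h1 h2
  have hφball : φ ∈ Metric.ball φ ε := Metric.mem_ball_self hε_pos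
  have key := intervalIntegral.hasDerivAt_integral_of_dominated_loc_of_deriv_le
    (μ := MeasureTheory.volume) (a := (0:ℝ)) (b := 1)
    (F := fun x s => (2*s)^k / qf x s^(k+1)) (F' := F')
    (bound := fun _ => (((k:ℝ)+1) * 2^(k+1)) / (δ^2)^(k+2)) (Metric.ball_mem_nhds φ hε_pos)
    (by -- measurability near φ
      filter_upwards [Metric.ball_mem_nhds φ hε_pos] with x hx
      have : (0:ℝ) < Real.sin x := lt_of_lt_of_le hδ_pos (hsin_lb x hx)
      exact (cont_integrand k this.ne').aestronglyMeasurable.restrict)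
    ((cont_integrand k hφs.ne').intervalIntegrable 0 1)
    (by -- measurability of F' φ
      apply Continuous.aestronglyMeasurable ?_ |>.restrict
      apply Continuous.div (by fun_prop) (by unfold qf; fun_prop)
      intro s; exact (pow_pos (qf_pos hφs.ne' s) (k+2)).ne')
    (by -- bound
      filter_upwards with s hs x hx
      have hs' : s ∈ Set.Ioc (0:ℝ) 1 := by
        rwa [Set.uIoc_of_le (by norm_num : (0:ℝ) ≤ 1)] at hs
      have hq := hq_lb x hx s
      have hqpos : (0:ℝ) < δ^2 := by positivity
      simp only [Real.norm_eq_abs]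
      rw [abs_div]
      have hd1 : (δ^2)^(k+2) ≤ |qf x s^(k+2)| := by
        rw [abs_of_pos (pow_pos (lt_of_lt_of_le hqpos hq) (k+2))]
        exact pow_le_pow_left₀ (le_of_lt hqpos) hq (k+2)
      apply div_le_div₀ (by positivity) ?_ (by positivity) hd1
      rw [abs_mul, abs_mul]
      have h2s : |(2*s)^(k+1)| ≤ 2^(k+1) := by
        rw [abs_pow]
        apply pow_le_pow_left₀ (abs_nonneg _)
        rw [abs_of_nonneg (by linarith [hs'.1] : (0:ℝ) ≤ 2*s)]
        linarith [hs'.2]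
      calc |((k:ℝ)+1)| * |Real.sin x| * |(2*s)^(k+1)|
          ≤ ((k:ℝ)+1) * 1 * 2^(k+1) := by
            apply mul_le_mul ?_ h2s (abs_nonneg _) (by positivity)
            apply mul_le_mul ?_ (Real.abs_sin_le_one x) (abs_nonneg _) (by positivity)
            rw [abs_of_nonneg (by positivity)]
        _ = ((k:ℝ)+1) * 2^(k+1) := by ring)
    (intervalIntegrable_const)
    (by -- differentiability
      filter_upwards with s hs x hx
      have hsinx : (0:ℝ) < Real.sin x := lt_of_lt_of_le hδ_pos (hsin_lb x hx)
      have hqx : 0 < qf x s := qf_pos hsinx.ne' s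
      have hq' : HasDerivAt (fun x => qf x s) (-(2*s*Real.sin x)) x := by
        unfold qf
        simpa using (((Real.hasDerivAt_cos x).const_mul (2*s)).const_add 1).add_const (s^2)
      have hu : HasDerivAt (fun x => qf x s^(k+1))
          ((k+1 : ℕ) * qf x s^k * (-(2*s*Real.sin x))) x := hq'.pow (k+1)
      have := (hasDerivAt_const x ((2*s)^k)).div hu (pow_pos hqx (k+1)).ne'
      refine this.congr_deriv ?_
      rw [hF']
      field_simp
      push_cast
      ring)
  have heq : (∫ s in (0:ℝ)..1, F' φ s) = ((k:ℝ)+1) * Real.sin φ * Ik (k+1) φ := by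
    rw [hF', Ik]
    simp only [mul_div_assoc]
    rw [intervalIntegral.integral_const_mul]
  rw [← heq]
  exact key.2

lemma hseq_rep (k : ℕ) : ∀ φ : ℝ, 0 < φ → φ < π →
    hseq (k+1) φ = 2 * (k.factorial : ℝ) * Real.sin φ^(2*k+1) * Ik k φ := by
  induction k with
  | zero =>
    intro φ h1 h2
    have hsφ := Real.sin_pos_of_pos_of_lt_pi h1 h2
    rw [Ik_zero h1 h2]
    show φ = _
    norm_num
    field_simp
  | succ k ih =>
    intro φ h1 h2
    have hsφ := Real.sin_pos_of_pos_of_lt_pi h1 h2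
    have hsin_pow : HasDerivAt (fun x => Real.sin x^(2*k+1))
        (((2*k+1 : ℕ) : ℝ) * Real.sin φ^(2*k) * Real.cos φ) φ := by
      simpa using (Real.hasDerivAt_sin φ).fun_pow (2*k+1)
    have hI := Ik_hasDeriv k h1 h2
    have hg := (hsin_pow.mul hI).const_mul (2 * (k.factorial : ℝ))
    have hev : hseq (k+1) =ᶠ[nhds φ]
        fun x => 2 * (k.factorial : ℝ) * (Real.sin x^(2*k+1) * Ik k x) := by
      filter_upwards [Ioo_mem_nhds h1 h2] with x hx
      have := ih x hx.1 hx.2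
      rw [this]; ring
    have hderiv : deriv (hseq (k+1)) φ = 2 * (k.factorial : ℝ) *
        (((2*k+1 : ℕ) : ℝ) * Real.sin φ^(2*k) * Real.cos φ * Ik k φ +
          Real.sin φ^(2*k+1) * (((k:ℝ)+1) * Real.sin φ * Ik (k+1) φ)) := by
      rw [hev.deriv_eq]; exact hg.deriv
    show deriv (hseq (k+1)) φ * Real.sin φ - (2*(k:ℝ)+1) * hseq (k+1) φ * Real.cos φ = _
    rw [hderiv, ih φ h1 h2, Nat.factorial_succ]
    push_cast
    have e1 : Real.sin φ ^ (2*(k+1)+1) = Real.sin φ^(2*k+1) * Real.sin φ^2 := by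
      congr 1; ring
    have e2 : Real.sin φ ^ (2*k+1) = Real.sin φ^(2*k) * Real.sin φ := by
      rw [← pow_succ]
    rw [e1, e2]
    ring

lemma Ik_nonneg (k : ℕ) {φ : ℝ} (h : Real.sin φ ≠ 0) : 0 ≤ Ik k φ := by
  apply intervalIntegral.integral_nonneg (by norm_num)
  intro s hs
  have := qf_pos h s
  have h2s : (0:ℝ) ≤ 2*s := by linarith [hs.1]
  positivity

lemma Ik_le (k : ℕ) {φ : ℝ} (h1 : 0 < φ) (h2 : φ ≤ π/2) : Ik k φ ≤ π/4 := by
  have h2' : φ < π := by linarith [Real.pi_pos]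
  have hsφ := Real.sin_pos_of_pos_of_lt_pi h1 h2'
  have hcφ : 0 ≤ Real.cos φ := Real.cos_nonneg_of_mem_Icc ⟨by linarith [Real.pi_pos], h2⟩
  have key : Ik k φ ≤ ∫ s in (0:ℝ)..1, 1/(1+s^2) := by
    apply intervalIntegral.integral_mono_on (by norm_num)
      ((cont_integrand k hsφ.ne').intervalIntegrable 0 1)
      (by apply Continuous.intervalIntegrable; fun_prop (disch := intro x; positivity))
    intro s hs
    obtain ⟨hs0, hs1⟩ := hs
    have hq : 1 + s^2 ≤ qf φ s := by
      simp only [qf]; nlinarith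
    have h2s : (2*s)^k ≤ (1+s^2)^k := by
      apply pow_le_pow_left₀ (by linarith) (by nlinarith)
    have hp1 : (0:ℝ) < 1 + s^2 := by positivity
    calc (2*s)^k / qf φ s^(k+1) ≤ (1+s^2)^k / (1+s^2)^(k+1) := by
          apply div_le_div₀ (by positivity) h2s (by positivity)
          exact pow_le_pow_left₀ (le_of_lt hp1) hq (k+1)
      _ = 1/(1+s^2) := by
          field_simp
          ring
  calc Ik k φ ≤ ∫ s in (0:ℝ)..1, 1/(1+s^2) := key
    _ = π/4 := by
        rw [integral_one_div_one_add_sq]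
        simp [Real.arctan_one]


theorem wseq_bound (j : ℕ) (hj : 1 ≤ j) (φ : ℝ) (hφ : φ ∈ Set.Ioc (0 : ℝ) (π/2)) :
    wseq j φ ≤ π ^ (j - 1) := by
  obtain ⟨h1, h2⟩ := hφ
  have hπ := Real.pi_pos
  have h2' : φ < π := by linarith
  have hsφ := Real.sin_pos_of_pos_of_lt_pi h1 h2'
  obtain ⟨k, rfl⟩ : ∃ k, j = k + 1 := ⟨j - 1, (Nat.succ_pred_eq_of_pos hj).symm⟩
  rcases Nat.eq_zero_or_pos k with rfl | hk
  · simp [wseq, hseq, Nat.factorial, div_self h1.ne']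
  · have hrep := hseq_rep k φ h1 h2'
    have hI0 := Ik_nonneg k hsφ.ne'
    have hIle := Ik_le k h1 h2
    have hsinle : Real.sin φ ≤ φ := Real.sin_le h1.le
    have hπφ0 : 0 ≤ π - φ := by linarith
    have hπφ : π - φ ≤ π := by linarith
    have hk1 : (1:ℝ) ≤ (k:ℝ) := by exact_mod_cast hk
    rw [wseq, hrep]
    simp only [Nat.add_sub_cancel]
    rw [div_le_iff₀ (by positivity)]
    have hfac : (((k+1).factorial : ℕ) : ℝ) = ((k:ℝ)+1) * (k.factorial : ℝ) := by
      rw [Nat.factorial_succ]; push_cast; ring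
    have hsplit : Real.sin φ^(2*k+1) = Real.sin φ^k * Real.sin φ^(k+1) := by
      rw [← pow_add]; congr 1; ring
    have key : 2 * Real.sin φ^(k+1) * Ik k φ * (π-φ)^k ≤ ((k:ℝ)+1) * φ^(k+1) * π^k := by
      calc 2 * Real.sin φ^(k+1) * Ik k φ * (π-φ)^k
          ≤ 2 * φ^(k+1) * (π/4) * π^k := by
            gcongr
        _ ≤ ((k:ℝ)+1) * φ^(k+1) * π^k := by
            nlinarith [mul_nonneg (pow_nonneg h1.le (k+1)) (pow_nonneg hπ.le k),
              Real.pi_le_four]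
    rw [hfac, hsplit]
    calc 2 * (k.factorial:ℝ) * (Real.sin φ^k * Real.sin φ^(k+1)) * Ik k φ * (π-φ)^k
        = ((k.factorial:ℝ) * Real.sin φ^k) * (2 * Real.sin φ^(k+1) * Ik k φ * (π-φ)^k) := by
          ring
      _ ≤ ((k.factorial:ℝ) * Real.sin φ^k) * (((k:ℝ)+1) * φ^(k+1) * π^k) := by
          exact mul_le_mul_of_nonneg_left key (by positivity)
      _ = π^k * (((k:ℝ)+1) * (k.factorial:ℝ) * φ^(k+1) * Real.sin φ^k) := by ring
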